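/- Let ξ ≠ 0, λ < 0, a₀ > 0, b₀ > 0, a₁, b₁ ∈ ℝ, and take γ = 1. Then every solution of the Emden system a''(t) − ξ²/a(t)³ = λ/a(t), b''(t) = λ/b(t), a(0) = a₀, a'(0) = a₁, b(0) = b₀, b'(0) = b₁ blows up in finite time: there is no pair of C² functions a, b : [0,∞) → ℝ with a(t) > 0 and b(t) > 0 for all t ≥ 0 satisfying the system and the initial conditions. -/

import Mathlib

open Set

lemma emden_key (lam : ℝ) (hlam : lam < 0) (b : ℝ → ℝ)
    (hb : ContDiffOn ℝ 2 b (Set.Ici 0))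
    (hpos : ∀ t ∈ Set.Ici (0 : ℝ), 0 < b t)
    (hode : ∀ t ∈ Set.Ici (0 : ℝ),
      derivWithin (derivWithin b (Set.Ici 0)) (Set.Ici 0) t = lam / b t) : False := by
  set b' := derivWithin b (Set.Ici 0) with hb'def
  have hud : UniqueDiffOn ℝ (Set.Ici (0:ℝ)) := uniqueDiffOn_Ici 0
  have hb'c1 : ContDiffOn ℝ 1 b' (Set.Ici 0) := hb.derivWithin hud (by norm_num)
  have hb'cont : ContinuousOn b' (Set.Ici 0) := hb'c1.continuousOn
  have hbdiff : DifferentiableOn ℝ b (Set.Ici 0) := hb.differentiableOn (by norm_num)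
  have hbcont : ContinuousOn b (Set.Ici 0) := hb.continuousOn
  have hmemn : ∀ x : ℝ, 0 < x → Set.Ici (0:ℝ) ∈ nhds x := fun x hx => Ici_mem_nhds hx
  have hderivb : ∀ x : ℝ, 0 < x → deriv b x = b' x := by
    intro x hx; rw [hb'def, derivWithin_of_mem_nhds (hmemn x hx)]
  have hderivb' : ∀ x : ℝ, 0 < x → deriv b' x = lam / b x := by
    intro x hx
    rw [← derivWithin_of_mem_nhds (hmemn x hx)]
    exact hode x (le_of_lt hx)
  have hbdiffat : ∀ x : ℝ, 0 < x → DifferentiableAt ℝ b x := by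
    intro x hx
    exact (hbdiff x (le_of_lt hx)).differentiableAt (hmemn x hx)
  -- b' is strictly antitone
  have hanti : StrictAntiOn b' (Set.Ici 0) := by
    apply strictAntiOn_of_deriv_neg (convex_Ici 0) hb'cont
    intro x hx
    rw [interior_Ici] at hx
    rw [hderivb' x hx]
    exact div_neg_of_neg_of_pos hlam (hpos x (mem_Ici.2 (le_of_lt (mem_Ioi.1 hx))))
  -- linear upper bound from a bound on the derivative
  have hlin : ∀ s : ℝ, 0 ≤ s → ∀ c : ℝ, (∀ x, s < x → b' x ≤ c) →
      ∀ t, s ≤ t → b t ≤ b s + c * (t - s) := by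
    intro s hs c hc t ht
    have hant : AntitoneOn (fun t => b t - c * t) (Set.Ici s) := by
      apply antitoneOn_of_deriv_nonpos (convex_Ici s)
      · exact (hbcont.mono (Ici_subset_Ici.2 hs)).sub (continuousOn_const.mul continuousOn_id)
      · intro x hx
        rw [interior_Ici] at hx
        exact ((hbdiffat x (lt_of_le_of_lt hs hx)).sub
          ((differentiable_id.const_mul c).differentiableAt)).differentiableWithinAt
      · intro x hx
        rw [interior_Ici] at hx
        have hx0 : 0 < x := lt_of_le_of_lt hs hx
        have hD : HasDerivAt (fun t => b t - c * t) (b' x - c) x := by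
          have := (hbdiffat x hx0).hasDerivAt.fun_sub ((hasDerivAt_id x).const_mul c)
          simpa [hderivb x hx0] using this
        rw [hD.deriv]
        linarith [hc x hx]
    have := hant self_mem_Ici (mem_Ici.2 ht) ht
    simp only at this
    linarith
  by_cases hcase : ∃ s : ℝ, 0 ≤ s ∧ b' s ≤ 0
  · -- once b' is nonpositive somewhere, b hits 0 in finite time
    obtain ⟨s, hs, hbs⟩ := hcase
    have hu0 : (0:ℝ) ≤ s + 1 := by linarith
    have hbu : b' (s + 1) < 0 :=
      lt_of_lt_of_le (hanti (mem_Ici.2 hs) (mem_Ici.2 hu0) (by linarith)) hbs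
    have hbupos : 0 < b (s + 1) := hpos _ hu0
    set u := s + 1 with hu
    set T := u + b u / (-(b' u)) + 1 with hT
    have hq : 0 < b u / (-(b' u)) := div_pos hbupos (by linarith)
    have hTu : u ≤ T := by rw [hT]; linarith
    have hbT : b T ≤ b u + b' u * (T - u) :=
      hlin u hu0 (b' u)
        (fun x hx => le_of_lt (hanti (mem_Ici.2 hu0) (mem_Ici.2 (le_trans hu0 (le_of_lt hx))) hx))
        T hTu
    have hkey : b' u * (b u / (-(b' u))) = -(b u) := by
      have hne : -(b' u) ≠ 0 := ne_of_gt (by linarith)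
      field_simp
      ring
      simp [ne_of_lt hbu]
    have hTfin : b T ≤ b' u := by
      have : T - u = b u / (-(b' u)) + 1 := by rw [hT]; ring
      rw [this] at hbT
      nlinarith [hbT, hkey]
    exact absurd (hpos T (le_trans hu0 hTu)) (by linarith)
  · -- otherwise b' > 0 everywhere; logarithmic comparison forces b' to become negative
    push_neg at hcase
    have hcase' : ∀ s : ℝ, 0 ≤ s → 0 < b' s := hcase
    have hb1 : 0 < b' 0 := hcase' 0 le_rfl
    set c := b' 0 with hc
    have hb0 : 0 < b 0 := hpos 0 Set.self_mem_Ici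
    have hlinb : ∀ t, 0 ≤ t → b t ≤ b 0 + c * t := by
      intro t ht
      have := hlin 0 le_rfl c
        (fun x hx => le_of_lt (hanti self_mem_Ici (mem_Ici.2 (le_of_lt hx)) hx)) t ht
      simpa using this
    have hden : ∀ x : ℝ, 0 ≤ x → 0 < b 0 + c * x := fun x hx => by nlinarith
    have hlogd : ∀ x : ℝ, 0 < x →
        HasDerivAt (fun t => Real.log (b 0 + c * t)) (c / (b 0 + c * x)) x := by
      intro x hx
      have h1 : HasDerivAt (fun t : ℝ => b 0 + c * t) c x := by
        simpa using (hasDerivAt_const x (b 0)).fun_add ((hasDerivAt_id x).const_mul c)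
      exact h1.log (ne_of_gt (hden x (le_of_lt hx)))
    have hant2 : AntitoneOn (fun t => b' t - (lam / c) * Real.log (b 0 + c * t)) (Set.Ici 0) := by
      apply antitoneOn_of_deriv_nonpos (convex_Ici 0)
      · apply hb'cont.sub (continuousOn_const.mul ?_)
        apply ContinuousOn.log
        · exact continuousOn_const.add (continuousOn_const.mul continuousOn_id)
        · intro x hx; exact ne_of_gt (hden x hx)
      · intro x hx; rw [interior_Ici] at hx
        have hdb' : DifferentiableAt ℝ b' x :=
          (hb'c1.differentiableOn one_ne_zero x (mem_Ici.2 (le_of_lt (mem_Ioi.1 hx)))).differentiableAt (hmemn x hx)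
        exact (hdb'.sub (((hlogd x hx).differentiableAt).const_mul _)).differentiableWithinAt
      · intro x hx; rw [interior_Ici] at hx
        have hdb' : DifferentiableAt ℝ b' x :=
          (hb'c1.differentiableOn one_ne_zero x (mem_Ici.2 (le_of_lt (mem_Ioi.1 hx)))).differentiableAt (hmemn x hx)
        rw [deriv_fun_sub hdb' (((hlogd x hx).differentiableAt).const_mul _),
          hderivb' x hx, deriv_const_mul _ (hlogd x hx).differentiableAt, (hlogd x hx).deriv]
        have hbx : 0 < b x := hpos x (mem_Ici.2 (le_of_lt (mem_Ioi.1 hx)))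
        have hle : b x ≤ b 0 + c * x := hlinb x (le_of_lt hx)
        have hdenx : 0 < b 0 + c * x := hden x (le_of_lt hx)
        have heq : (lam / c) * (c / (b 0 + c * x)) = lam / (b 0 + c * x) := by
          field_simp
        rw [heq, sub_nonpos, div_le_div_iff₀ hbx hdenx]
        nlinarith
    -- choose a large time T where b' must be negative
    set E := c ^ 2 / (-lam) with hE
    have hEpos : 0 < E := div_pos (pow_pos hb1 2) (by linarith)
    set T := b 0 * Real.exp E / c with hTdef
    have hTpos : 0 < T := div_pos (by positivity) hb1
    have hcT : b 0 + c * T = b 0 * (1 + Real.exp E) := by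
      rw [hTdef]; field_simp
    have h1 := hant2 self_mem_Ici (mem_Ici.2 hTpos.le) hTpos.le
    simp only [mul_zero, add_zero] at h1
    have hlogeq : Real.log (b 0 + c * T) = Real.log (b 0) + Real.log (1 + Real.exp E) := by
      rw [hcT, Real.log_mul (ne_of_gt hb0) (by positivity)]
    have hlogE : E < Real.log (1 + Real.exp E) := by
      have := Real.log_lt_log (Real.exp_pos E) (by linarith [Real.exp_pos E] : Real.exp E < 1 + Real.exp E)
      rwa [Real.log_exp] at this
    have hlamc : lam / c < 0 := div_neg_of_neg_of_pos hlam hb1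
    have hlne : lam ≠ 0 := ne_of_lt hlam
    have hcne : c ≠ 0 := ne_of_gt hb1
    have hmul : (lam / c) * E = -c := by
      rw [hE]; field_simp
    have hfin : b' T < 0 := by
      rw [hlogeq] at h1
      nlinarith [mul_lt_mul_of_neg_left hlogE hlamc]
    exact absurd (hcase' T hTpos.le) (by linarith)

theorem emden_system_blowup_gamma_one_lambda_neg
    (ξ lam a₀ a₁ b₀ b₁ : ℝ)
    (hξ : ξ ≠ 0) (hlam : lam < 0) (ha₀ : 0 < a₀) (hb₀ : 0 < b₀) :
    ¬ ∃ a b : ℝ → ℝ,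
      ContDiffOn ℝ 2 a (Set.Ici 0) ∧ ContDiffOn ℝ 2 b (Set.Ici 0) ∧
      (∀ t ∈ Set.Ici (0 : ℝ), 0 < a t ∧ 0 < b t) ∧
      (∀ t ∈ Set.Ici (0 : ℝ),
        derivWithin (derivWithin a (Set.Ici 0)) (Set.Ici 0) t
          - ξ ^ 2 / (a t) ^ 3 = lam / a t) ∧
      (∀ t ∈ Set.Ici (0 : ℝ),
        derivWithin (derivWithin b (Set.Ici 0)) (Set.Ici 0) t = lam / b t) ∧
      a 0 = a₀ ∧ derivWithin a (Set.Ici 0) 0 = a₁ ∧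
      b 0 = b₀ ∧ derivWithin b (Set.Ici 0) 0 = b₁ := by
  rintro ⟨a, b, _, hb, hpos, _, hodeb, _, _, _, _⟩
  exact emden_key lam hlam b hb (fun t ht => (hpos t ht).2) hodeb
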